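/- Let g ∈ L²(Ω), let α₁, α₂ > 0, and define E(u,α) := ‖u − g‖_{L²(Ω)}² + α·TV(u). If u_{α_i} minimizes E(·,α_i) over {u ∈ L²(Ω) : TV(u) < ∞} for i = 1,2, then ‖u_{α₁} − u_{α₂}‖_{L²(Ω)} ≤ C·‖g − g_Ω‖_{L²(Ω)}, where C := min { 2|α₂ − α₁|/(α₂ + α₁), (|α₂ − α₁|/(α₂ + α₁))^{1/2} }. -/

import Mathlib

open MeasureTheory Filter
open scoped ENNReal NNReal

noncomputable section

abbrev E2 : Type := EuclideanSpace ℝ (Fin 2)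

abbrev μΩ (Ω : Set E2) : Measure E2 := MeasureTheory.volume.restrict Ω

abbrev LpΩ (Ω : Set E2) := Lp ℝ 2 (μΩ Ω)

/-- Discrete divergence of a C¹ vector field. -/
def divg (ξ : E2 → E2) (x : E2) : ℝ :=
  ∑ i : Fin 2, fderiv ℝ ξ x (EuclideanSpace.single i 1) i

/-- Admissible test vector fields for the total variation. -/
def IsTestField (Ω : Set E2) (ξ : E2 → E2) : Prop :=
  ContDiff ℝ 1 ξ ∧ HasCompactSupport ξ ∧ tsupport ξ ⊆ Ω ∧ ∀ x, ‖ξ x‖ ≤ 1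

/-- Total variation of `u ∈ L²(Ω)` (valued in `ℝ≥0∞`). -/
def TV (Ω : Set E2) (u : LpΩ Ω) : ℝ≥0∞ :=
  ⨆ ξ : {ξ : E2 → E2 // IsTestField Ω ξ},
    ENNReal.ofReal (∫ x, u x * divg ξ.1 x ∂(μΩ Ω))

/-- Fidelity term `H_τ(u;g) = (1/τ)‖Tu - g‖_{L^τ}^τ`. -/
def Hfid (Ω : Set E2) (τ : ℕ) (T : LpΩ Ω →L[ℝ] LpΩ Ω) (g u : LpΩ Ω) : ℝ :=
  (1 / (τ : ℝ)) * ∫ x, |(T u - g : LpΩ Ω) x| ^ τ ∂(μΩ Ω)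

/-- The functional `J_τ(u,α) = H_τ(u;g) + α · TV(u)` (valued in `ℝ≥0∞`). -/
def Jfun (Ω : Set E2) (τ : ℕ) (T : LpΩ Ω →L[ℝ] LpΩ Ω) (g : LpΩ Ω) (α : ℝ)
    (u : LpΩ Ω) : ℝ≥0∞ :=
  ENNReal.ofReal (Hfid Ω τ T g u) + ENNReal.ofReal α * TV Ω u

/-- The mean value `g_Ω` of `g` over `Ω`. -/
def meanG (Ω : Set E2) (g : LpΩ Ω) : ℝ :=
  (∫ x, g x ∂(μΩ Ω)) / (MeasureTheory.volume Ω).toReal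

/-- `‖g - g_Ω‖_{L^τ(Ω)}^τ`. -/
def gMeanDist (Ω : Set E2) (τ : ℕ) (g : LpΩ Ω) : ℝ :=
  ∫ x, |g x - meanG Ω g| ^ τ ∂(μΩ Ω)

/-- `B_τ = (ν_τ/τ)|Ω|`. -/
def Bval (Ω : Set E2) (τ : ℕ) (ν : ℝ) : ℝ :=
  (ν / (τ : ℝ)) * (MeasureTheory.volume Ω).toReal

/-- `o` represents the constant function `1_Ω` in `L²(Ω)`. -/
def IsOneFun (Ω : Set E2) (o : LpΩ Ω) : Prop :=
  ∀ᵐ x ∂(μΩ Ω), o x = 1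

/-- `u` minimizes `J_τ(·,α)` over `{TV < ∞}`. -/
def IsJMin (Ω : Set E2) (τ : ℕ) (T : LpΩ Ω →L[ℝ] LpΩ Ω) (g : LpΩ Ω) (α : ℝ)
    (u : LpΩ Ω) : Prop :=
  TV Ω u < ⊤ ∧ ∀ v, TV Ω v < ⊤ → Jfun Ω τ T g α u ≤ Jfun Ω τ T g α v

/-- The denoising energy `E(u,α) = ‖u-g‖²_{L²} + α·TV(u)` (valued in `ℝ≥0∞`). -/
def Efun (Ω : Set E2) (g : LpΩ Ω) (α : ℝ) (u : LpΩ Ω) : ℝ≥0∞ :=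
  ENNReal.ofReal (‖u - g‖ ^ 2) + ENNReal.ofReal α * TV Ω u

-- quadratic identity
lemma quad_id {V : Type*} [NormedAddCommGroup V] [InnerProductSpace ℝ V] (a b : V) (t : ℝ) :
    ‖(1 - t) • a + t • b‖ ^ 2
      = (1 - t) * ‖a‖ ^ 2 + t * ‖b‖ ^ 2 - t * (1 - t) * ‖a - b‖ ^ 2 := by
  simp only [← real_inner_self_eq_norm_sq, inner_add_left, inner_add_right, inner_sub_left,
    inner_sub_right, real_inner_smul_left, real_inner_smul_right, real_inner_comm a b]
  ring

lemma divg_continuous {ξ : E2 → E2} (h : ContDiff ℝ 1 ξ) : Continuous (divg ξ) := by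
  unfold divg
  refine continuous_finset_sum _ fun i _ => ?_
  exact (continuous_apply i).comp ((PiLp.continuous_ofLp (p := 2) (β := fun _ : Fin 2 => ℝ)).comp ((h.continuous_fderiv one_ne_zero).clm_apply continuous_const))

lemma fderiv_zero_outside {ξ : E2 → E2} {x : E2} (hx : x ∉ tsupport ξ) :
    fderiv ℝ ξ x = 0 := by
  have h0 : ξ =ᶠ[nhds x] 0 := notMem_tsupport_iff_eventuallyEq.1 hx
  rw [h0.fderiv_eq]
  exact fderiv_const_apply 0

lemma divg_zero_outside {ξ : E2 → E2} {x : E2} (hx : x ∉ tsupport ξ) : divg ξ x = 0 := by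
  simp [divg, fderiv_zero_outside hx]
end
noncomputable section
lemma divg_hcs {ξ : E2 → E2} (h : HasCompactSupport ξ) : HasCompactSupport (divg ξ) := by
  apply h.mono'
  intro x hx
  by_contra hxt
  exact hx (divg_zero_outside hxt)

lemma integral_divg_zero {Ω : Set E2} {ξ : E2 → E2} (hξ : IsTestField Ω ξ) :
    ∫ x, divg ξ x ∂(μΩ Ω) = 0 := by
  obtain ⟨hc1, hcs, hsupp, -⟩ := hξ
  rw [MeasureTheory.setIntegral_eq_integral_of_forall_compl_eq_zero
    (fun x hx => divg_zero_outside (fun h => hx (hsupp h)))]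
  unfold divg
  have hint : ∀ i : Fin 2, Integrable (fun x => fderiv ℝ ξ x (EuclideanSpace.single i 1) i)
      (volume : Measure E2) := by
    intro i
    have hcont : Continuous fun x => fderiv ℝ ξ x (EuclideanSpace.single i 1) i :=
      (continuous_apply i).comp ((PiLp.continuous_ofLp (p := 2) (β := fun _ : Fin 2 => ℝ)).comp ((hc1.continuous_fderiv one_ne_zero).clm_apply continuous_const))
    refine hcont.integrable_of_hasCompactSupport (hcs.mono' ?_)
    intro x hx
    by_contra hxt
    apply hx
    simp [Function.mem_support, fderiv_zero_outside hxt]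
  rw [MeasureTheory.integral_finset_sum _ (fun i _ => hint i)]
  refine Finset.sum_eq_zero fun i _ => ?_
  -- identify with fderiv of scalar function
  set v : E2 := EuclideanSpace.single i 1
  have hdiffξ : Differentiable ℝ ξ := hc1.differentiable one_ne_zero
  have hkey : ∀ x, fderiv ℝ (fun y => ξ y i) x v = fderiv ℝ ξ x v i := by
    intro x
    have : (fun y => ξ y i) = (EuclideanSpace.proj (𝕜 := ℝ) i) ∘ ξ := rfl
    rw [this, fderiv_comp x (ContinuousLinearMap.differentiableAt _) (hdiffξ x),
      ContinuousLinearMap.fderiv]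
    rfl
  have hdiffi : Differentiable ℝ (fun y => ξ y i) := fun x =>
    ((EuclideanSpace.proj (𝕜 := ℝ) i).differentiableAt).comp x (hdiffξ x)
  have h0 : ∫ x, (fun _ => (1:ℝ)) x * fderiv ℝ (fun y => ξ y i) x v ∂(volume : Measure E2)
      = - ∫ x, fderiv ℝ (fun _ => (1:ℝ)) x v * (fun y => ξ y i) x ∂(volume : Measure E2) := by
    apply integral_mul_fderiv_eq_neg_fderiv_mul_of_integrable
    · simp only [fderiv_const]
      simp
    · simp only [one_mul]
      have : (fun x => fderiv ℝ (fun y => ξ y i) x v) = fun x => fderiv ℝ ξ x v i :=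
        funext hkey
      rw [this]
      exact hint i
    · simp only [one_mul]
      refine ((continuous_apply i).comp ((PiLp.continuous_ofLp (p := 2) (β := fun _ : Fin 2 => ℝ)).comp hc1.continuous)).integrable_of_hasCompactSupport
        (hcs.mono' ?_)
      intro x hx
      by_contra hxt
      apply hx
      have : ξ x = 0 := image_eq_zero_of_notMem_tsupport hxt
      simp [Function.mem_support, this]
    · exact fun x _ => differentiableAt_const _
    · exact fun x _ => hdiffi x
  simp only [one_mul, fderiv_const, fderiv_const_apply, Pi.zero_apply, ContinuousLinearMap.zero_apply, zero_mul,
    integral_zero, neg_zero] at h0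
  have : (fun x => fderiv ℝ (fun y => ξ y i) x v) = fun x => fderiv ℝ ξ x v i :=
    funext hkey
  rw [this] at h0
  exact h0

lemma integrable_mul_divg {Ω : Set E2} [IsFiniteMeasure (μΩ Ω)] (u : LpΩ Ω) {ξ : E2 → E2}
    (hξ : IsTestField Ω ξ) : Integrable (fun x => u x * divg ξ x) (μΩ Ω) := by
  have hu : Integrable u (μΩ Ω) := (Lp.memLp u).integrable (by norm_num)
  have hcont : Continuous (divg ξ) := divg_continuous hξ.1
  obtain ⟨C, hC⟩ := (divg_hcs hξ.2.1).exists_bound_of_continuous hcont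
  have := hu.bdd_mul hcont.aestronglyMeasurable (ae_of_all _ hC)
  simpa [mul_comm] using this

lemma TV_comb_le {Ω : Set E2} [IsFiniteMeasure (μΩ Ω)] (u v : LpΩ Ω) {t : ℝ}
    (ht0 : 0 ≤ t) (ht1 : t ≤ 1) :
    TV Ω ((1 - t) • u + t • v) ≤
      ENNReal.ofReal (1 - t) * TV Ω u + ENNReal.ofReal t * TV Ω v := by
  refine iSup_le fun ξ => ?_
  have hu := integrable_mul_divg u ξ.2
  have hv := integrable_mul_divg v ξ.2
  have hcongr : (fun x => ((1 - t) • u + t • v : LpΩ Ω) x * divg ξ.1 x)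
      =ᵐ[μΩ Ω] fun x => (1 - t) * (u x * divg ξ.1 x) + t * (v x * divg ξ.1 x) := by
    filter_upwards [Lp.coeFn_add ((1 - t) • u) (t • v), Lp.coeFn_smul (1 - t) u,
      Lp.coeFn_smul t v] with x h1 h2 h3
    rw [h1]
    simp only [Pi.add_apply, h2, h3, Pi.smul_apply, smul_eq_mul]
    ring
  rw [integral_congr_ae hcongr, integral_add (hu.const_mul _) (hv.const_mul _),
    integral_const_mul, integral_const_mul]
  calc ENNReal.ofReal ((1 - t) * ∫ x, u x * divg ξ.1 x ∂(μΩ Ω)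
        + t * ∫ x, v x * divg ξ.1 x ∂(μΩ Ω))
      ≤ ENNReal.ofReal ((1 - t) * ∫ x, u x * divg ξ.1 x ∂(μΩ Ω))
        + ENNReal.ofReal (t * ∫ x, v x * divg ξ.1 x ∂(μΩ Ω)) := ENNReal.ofReal_add_le
    _ = ENNReal.ofReal (1 - t) * ENNReal.ofReal (∫ x, u x * divg ξ.1 x ∂(μΩ Ω))
        + ENNReal.ofReal t * ENNReal.ofReal (∫ x, v x * divg ξ.1 x ∂(μΩ Ω)) := by
        rw [ENNReal.ofReal_mul (by linarith), ENNReal.ofReal_mul ht0]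
    _ ≤ ENNReal.ofReal (1 - t) * TV Ω u + ENNReal.ofReal t * TV Ω v := by
        gcongr
        · exact le_iSup (fun ξ' : {ξ' : E2 → E2 // IsTestField Ω ξ'} =>
            ENNReal.ofReal (∫ x, u x * divg ξ'.1 x ∂(μΩ Ω))) ξ
        · exact le_iSup (fun ξ' : {ξ' : E2 → E2 // IsTestField Ω ξ'} =>
            ENNReal.ofReal (∫ x, v x * divg ξ'.1 x ∂(μΩ Ω))) ξ

lemma TV_const_zero {Ω : Set E2} (v₀ : LpΩ Ω) {c : ℝ}
    (hv₀ : ∀ᵐ x ∂(μΩ Ω), v₀ x = c) : TV Ω v₀ = 0 := by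
  rw [TV, ENNReal.iSup_eq_zero]
  intro ξ
  have hcongr : (fun x => v₀ x * divg ξ.1 x) =ᵐ[μΩ Ω] fun x => c * divg ξ.1 x := by
    filter_upwards [hv₀] with x hx
    rw [hx]
  rw [integral_congr_ae hcongr, integral_const_mul, integral_divg_zero ξ.2, mul_zero]
  simp

lemma norm_sq_eq {Ω : Set E2} (f : LpΩ Ω) : ‖f‖ ^ 2 = ∫ x, (f x) ^ 2 ∂(μΩ Ω) := by
  rw [← real_inner_self_eq_norm_sq, L2.inner_def]
  congr 1
  ext x
  simp [sq]

lemma limit_aux {X R : ℝ} (h : ∀ t : ℝ, 0 < t → t < 1 → (1 - t) * X ≤ R) : X ≤ R := by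
  have h2 := h (1/2) (by norm_num) (by norm_num)
  rcases le_or_gt X 0 with hX | hX
  · nlinarith
  · by_contra hc
    push_neg at hc
    have hR : 0 < R := by nlinarith
    have ht := h ((X - R) / (2 * X)) (div_pos (by linarith) (by linarith))
      (by rw [div_lt_one (by linarith)]; linarith)
    have hq : (X - R) / (2 * X) * X = (X - R) / 2 := by field_simp
    nlinarith



set_option maxHeartbeats 1000000 in
/-- `‖u_{α₁} - u_{α₂}‖_{L²} ≤ C‖g - g_Ω‖_{L²}` with
`C = min{2|α₂-α₁|/(α₂+α₁), (|α₂-α₁|/(α₂+α₁))^{1/2}}`. -/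
theorem stmt5 (Ω : Set E2) (hΩo : IsOpen Ω) (hΩb : Bornology.IsBounded Ω)
    (hΩpos : 0 < MeasureTheory.volume Ω)
    (g : LpΩ Ω) (α₁ α₂ : ℝ) (hα₁ : 0 < α₁) (hα₂ : 0 < α₂)
    (u₁ u₂ : LpΩ Ω)
    (hu₁ : TV Ω u₁ < ⊤ ∧ ∀ v, TV Ω v < ⊤ → Efun Ω g α₁ u₁ ≤ Efun Ω g α₁ v)
    (hu₂ : TV Ω u₂ < ⊤ ∧ ∀ v, TV Ω v < ⊤ → Efun Ω g α₂ u₂ ≤ Efun Ω g α₂ v) :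
    ‖u₁ - u₂‖ ≤
      min (2 * |α₂ - α₁| / (α₂ + α₁)) (Real.sqrt (|α₂ - α₁| / (α₂ + α₁))) *
        Real.sqrt (∫ x, (g x - meanG Ω g) ^ 2 ∂(μΩ Ω)) := by
  haveI : IsFiniteMeasure (μΩ Ω) :=
    ⟨by rw [Measure.restrict_apply_univ]; exact hΩb.measure_lt_top⟩
  set c := meanG Ω g with hc
  set v₀ : LpΩ Ω := (memLp_const c).toLp (fun _ => c) with hv₀def
  have hv₀ : ∀ᵐ x ∂(μΩ Ω), v₀ x = c := (memLp_const c).coeFn_toLp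
  have hTV0 : TV Ω v₀ = 0 := TV_const_zero v₀ hv₀
  -- real form of minimality comparison
  have hmin : ∀ (α : ℝ) (u w : LpΩ Ω), 0 ≤ α → TV Ω u < ⊤ → TV Ω w < ⊤ →
      Efun Ω g α u ≤ Efun Ω g α w →
      ‖u - g‖ ^ 2 + α * (TV Ω u).toReal ≤ ‖w - g‖ ^ 2 + α * (TV Ω w).toReal := by
    intro α u w hα hTu hTw hE
    have h1 : (ENNReal.ofReal (‖u - g‖ ^ 2) + ENNReal.ofReal α * TV Ω u).toReal
        = ‖u - g‖ ^ 2 + α * (TV Ω u).toReal := by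
      rw [ENNReal.toReal_add ENNReal.ofReal_ne_top
        (ENNReal.mul_ne_top ENNReal.ofReal_ne_top hTu.ne), ENNReal.toReal_mul,
        ENNReal.toReal_ofReal (by positivity), ENNReal.toReal_ofReal hα]
    have h2 : (ENNReal.ofReal (‖w - g‖ ^ 2) + ENNReal.ofReal α * TV Ω w).toReal
        = ‖w - g‖ ^ 2 + α * (TV Ω w).toReal := by
      rw [ENNReal.toReal_add ENNReal.ofReal_ne_top
        (ENNReal.mul_ne_top ENNReal.ofReal_ne_top hTw.ne), ENNReal.toReal_mul,
        ENNReal.toReal_ofReal (by positivity), ENNReal.toReal_ofReal hα]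
    rw [← h1, ← h2]
    exact ENNReal.toReal_mono (by
      exact ENNReal.add_ne_top.2 ⟨ENNReal.ofReal_ne_top,
        ENNReal.mul_ne_top ENNReal.ofReal_ne_top hTw.ne⟩) hE
  set T₁ := (TV Ω u₁).toReal with hT₁def
  set T₂ := (TV Ω u₂).toReal with hT₂def
  set F₁ := ‖u₁ - g‖ ^ 2 with hF₁def
  set F₂ := ‖u₂ - g‖ ^ 2 with hF₂def
  set X := ‖u₁ - u₂‖ ^ 2 with hXdef
  set N := ‖u₁ - u₂‖ with hNdef
  set D := ‖v₀ - g‖ with hDdef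
  -- strong convexity at a minimizer
  have hstrong : ∀ (α : ℝ) (u w : LpΩ Ω), 0 < α → TV Ω u < ⊤ → TV Ω w < ⊤ →
      (∀ v, TV Ω v < ⊤ → Efun Ω g α u ≤ Efun Ω g α v) →
      ‖u - w‖ ^ 2 ≤ ‖w - g‖ ^ 2 - ‖u - g‖ ^ 2
        + α * ((TV Ω w).toReal - (TV Ω u).toReal) := by
    intro α u w hα hTu hTw hminu
    apply limit_aux
    intro t ht0 ht1
    set wt : LpΩ Ω := (1 - t) • u + t • w with hwtdef
    have hTwt : TV Ω wt ≤ ENNReal.ofReal (1 - t) * TV Ω u + ENNReal.ofReal t * TV Ω w :=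
      TV_comb_le u w ht0.le ht1.le
    have hTwtfin : TV Ω wt < ⊤ := lt_of_le_of_lt hTwt
      (by
        apply ENNReal.add_lt_top.2
        constructor <;> exact ENNReal.mul_lt_top ENNReal.ofReal_lt_top
          (by first | exact hTu | exact hTw))
    have hTwtR : (TV Ω wt).toReal ≤ (1 - t) * (TV Ω u).toReal + t * (TV Ω w).toReal := by
      have := ENNReal.toReal_mono (by
        exact ENNReal.add_ne_top.2 ⟨ENNReal.mul_ne_top ENNReal.ofReal_ne_top hTu.ne,
          ENNReal.mul_ne_top ENNReal.ofReal_ne_top hTw.ne⟩) hTwt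
      rwa [ENNReal.toReal_add (ENNReal.mul_ne_top ENNReal.ofReal_ne_top hTu.ne)
        (ENNReal.mul_ne_top ENNReal.ofReal_ne_top hTw.ne), ENNReal.toReal_mul,
        ENNReal.toReal_mul, ENNReal.toReal_ofReal (by linarith),
        ENNReal.toReal_ofReal ht0.le] at this
    have hEreal := hmin α u wt hα.le hTu hTwtfin (hminu wt hTwtfin)
    have hwtg : wt - g = (1 - t) • (u - g) + t • (w - g) := by
      rw [hwtdef]; module
    have hnorm : ‖wt - g‖ ^ 2
        = (1 - t) * ‖u - g‖ ^ 2 + t * ‖w - g‖ ^ 2 - t * (1 - t) * ‖u - w‖ ^ 2 := by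
      rw [hwtg, quad_id]
      congr 2
      rw [show (u - g) - (w - g) = u - w by module]
    rw [hnorm] at hEreal
    have ht' : t * ((1 - t) * ‖u - w‖ ^ 2) ≤
        t * (‖w - g‖ ^ 2 - ‖u - g‖ ^ 2 + α * ((TV Ω w).toReal - (TV Ω u).toReal)) := by
      nlinarith [hTwtR, hEreal, hα.le]
    have := (mul_le_mul_iff_right₀ ht0).1 ht'
    linarith
  have key1 : X ≤ F₂ - F₁ + α₁ * (T₂ - T₁) :=
    hstrong α₁ u₁ u₂ hα₁ hu₁.1 hu₂.1 hu₁.2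
  have key2 : X ≤ F₁ - F₂ + α₂ * (T₁ - T₂) := by
    have := hstrong α₂ u₂ u₁ hα₂ hu₂.1 hu₁.1 hu₂.2
    rwa [norm_sub_rev u₂ u₁] at this
  have key : (α₂ + α₁) * X ≤ (α₂ - α₁) * (F₂ - F₁) := by nlinarith
  -- bounds from comparison with the constant v₀
  have hbound : ∀ (α : ℝ) (u : LpΩ Ω), 0 < α → TV Ω u < ⊤ →
      (∀ v, TV Ω v < ⊤ → Efun Ω g α u ≤ Efun Ω g α v) → ‖u - g‖ ^ 2 ≤ D ^ 2 := by
    intro α u hα hTu hminu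
    have := hmin α u v₀ hα.le hTu (by rw [hTV0]; exact ENNReal.zero_lt_top)
      (hminu v₀ (by rw [hTV0]; exact ENNReal.zero_lt_top))
    rw [hTV0] at this
    simp only [ENNReal.toReal_zero, mul_zero, add_zero] at this
    have hTnn : (0:ℝ) ≤ (TV Ω u).toReal := ENNReal.toReal_nonneg
    nlinarith [mul_nonneg hα.le hTnn]
  have hF₁D : F₁ ≤ D ^ 2 := hbound α₁ u₁ hα₁ hu₁.1 hu₁.2
  have hF₂D : F₂ ≤ D ^ 2 := hbound α₂ u₂ hα₂ hu₂.1 hu₂.2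
  have hF₁nn : (0:ℝ) ≤ F₁ := by rw [hF₁def]; positivity
  have hF₂nn : (0:ℝ) ≤ F₂ := by rw [hF₂def]; positivity
  have hDnn : (0:ℝ) ≤ D := norm_nonneg _
  have hNnn : (0:ℝ) ≤ N := norm_nonneg _
  have hS : (0:ℝ) < α₂ + α₁ := by linarith
  -- identify D with the integral expression
  have hInt : ∫ x, (g x - c) ^ 2 ∂(μΩ Ω) = D ^ 2 := by
    have hae : (fun x => ((g - v₀ : LpΩ Ω) x) ^ 2) =ᵐ[μΩ Ω] fun x => (g x - c) ^ 2 := by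
      filter_upwards [Lp.coeFn_sub g v₀, hv₀] with x h1 h2
      rw [h1, Pi.sub_apply, h2]
    rw [← integral_congr_ae hae, ← norm_sq_eq (g - v₀), hDdef, norm_sub_rev]
  have hsqrtI : Real.sqrt (∫ x, (g x - c) ^ 2 ∂(μΩ Ω)) = D := by
    rw [hInt, Real.sqrt_sq hDnn]
  rw [hsqrtI, min_mul_of_nonneg _ _ hDnn]
  -- norm distances
  have h1g : ‖u₁ - g‖ ≤ D := by nlinarith [norm_nonneg (u₁ - g)]
  have h2g : ‖u₂ - g‖ ≤ D := by nlinarith [norm_nonneg (u₂ - g)]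
  have habs0 : |‖u₂ - g‖ - ‖u₁ - g‖| ≤ N := by
    have h := abs_norm_sub_norm_le (u₂ - g) (u₁ - g)
    rw [show (u₂ - g) - (u₁ - g) = u₂ - u₁ by module, norm_sub_rev u₂ u₁] at h
    exact h
  have habs : |F₂ - F₁| ≤ N * (2 * D) := by
    have hfac : F₂ - F₁ = (‖u₂ - g‖ - ‖u₁ - g‖) * (‖u₂ - g‖ + ‖u₁ - g‖) := by
      rw [hF₁def, hF₂def]; ring
    calc |F₂ - F₁| = |‖u₂ - g‖ - ‖u₁ - g‖| * |‖u₂ - g‖ + ‖u₁ - g‖| := by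
          rw [hfac, abs_mul]
      _ ≤ N * (2 * D) := mul_le_mul habs0
          (by rw [abs_of_nonneg (by positivity)]; linarith) (abs_nonneg _) hNnn
  have habsD : |F₂ - F₁| ≤ D ^ 2 := abs_le.2 ⟨by linarith, by linarith⟩
  have hkey' : (α₂ + α₁) * X ≤ |α₂ - α₁| * |F₂ - F₁| := le_trans key
    (by
      calc (α₂ - α₁) * (F₂ - F₁) ≤ |(α₂ - α₁) * (F₂ - F₁)| := le_abs_self _
        _ = |α₂ - α₁| * |F₂ - F₁| := abs_mul _ _)
  refine le_min ?_ ?_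
  · -- linear bound
    rcases eq_or_lt_of_le hNnn with hN0 | hN0
    · rw [← hN0]; positivity
    · have hXN : X = N * N := by rw [hXdef]; ring
      have hstep : (α₂ + α₁) * N ≤ 2 * |α₂ - α₁| * D := by
        have h1 : (α₂ + α₁) * (N * N) ≤ |α₂ - α₁| * (N * (2 * D)) :=
          le_trans (hXN ▸ hkey') (mul_le_mul_of_nonneg_left habs (abs_nonneg _))
        nlinarith
      rw [div_mul_eq_mul_div, le_div_iff₀ hS]
      linarith
  · -- sqrt bound
    have hXb : X ≤ |α₂ - α₁| / (α₂ + α₁) * D ^ 2 := by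
      rw [div_mul_eq_mul_div, le_div_iff₀ hS]
      calc X * (α₂ + α₁) = (α₂ + α₁) * X := by ring
        _ ≤ |α₂ - α₁| * |F₂ - F₁| := hkey'
        _ ≤ |α₂ - α₁| * D ^ 2 := mul_le_mul_of_nonneg_left habsD (abs_nonneg _)
    have hBnn : (0:ℝ) ≤ Real.sqrt (|α₂ - α₁| / (α₂ + α₁)) := Real.sqrt_nonneg _
    have hsq : N ^ 2 ≤ (Real.sqrt (|α₂ - α₁| / (α₂ + α₁)) * D) ^ 2 := by
      rw [mul_pow, Real.sq_sqrt (div_nonneg (abs_nonneg _) hS.le)]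
      rw [← hXdef]
      exact hXb
    nlinarith [mul_nonneg hBnn hDnn]

end
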